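/- (Theorem 4, θ-coordinates) For every θ ∈ ℝ^{S⁺} and all x, y, z ∈ S⁺, the Riemannian connection coefficient Γ_{xyz}(θ) = (1/2)(∂g_{yz}(θ)/∂θ(x) + ∂g_{xz}(θ)/∂θ(y) − ∂g_{xy}(θ)/∂θ(z)), where g_{xy}(θ) = ∂²ψ(θ)/∂θ(x)∂θ(y), satisfies Γ_{xyz}(θ) = (1/2) Σ_{s∈S} (ζ(x,s) − η_θ(x)) (ζ(y,s) − η_θ(y)) (ζ(z,s) − η_θ(z)) p_θ(s). -/

import Mathlib

/-- `ψ(θ) = log Σ_{x∈S} exp(Σ_{s∈S⁺, s≤x} θ(s))`. -/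
noncomputable def psi {S : Type*} [Fintype S] [PartialOrder S] [OrderBot S]
    [DecidableEq S] [DecidableRel ((· ≤ ·) : S → S → Prop)]
    (θ : {x : S // x ≠ ⊥} → ℝ) : ℝ :=
  Real.log (∑ x : S, Real.exp (∑ s : {x : S // x ≠ ⊥}, if (s : S) ≤ x then θ s else 0))

/-- `p_θ(x) = exp(Σ_{s∈S⁺, s≤x} θ(s) − ψ(θ))`. -/
noncomputable def pTheta {S : Type*} [Fintype S] [PartialOrder S] [OrderBot S]
    [DecidableEq S] [DecidableRel ((· ≤ ·) : S → S → Prop)]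
    (θ : {x : S // x ≠ ⊥} → ℝ) (x : S) : ℝ :=
  Real.exp ((∑ s : {x : S // x ≠ ⊥}, if (s : S) ≤ x then θ s else 0) - psi θ)

/-- `η_θ(x) = Σ_{s ≥ x} p_θ(s)`. -/
noncomputable def etaTheta {S : Type*} [Fintype S] [PartialOrder S] [OrderBot S]
    [DecidableEq S] [DecidableRel ((· ≤ ·) : S → S → Prop)]
    (θ : {x : S // x ≠ ⊥} → ℝ) (x : S) : ℝ :=
  ∑ s ∈ Finset.univ.filter (fun s => x ≤ s), pTheta θ s

/-- Partial derivative of a function `f : ℝ^{S⁺} → ℝ` with respect to the coordinate `x`. -/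
noncomputable def pd {S : Type*} [Fintype S] [PartialOrder S] [OrderBot S] [DecidableEq S]
    (f : ({x : S // x ≠ ⊥} → ℝ) → ℝ) (x : {x : S // x ≠ ⊥})
    (θ : {x : S // x ≠ ⊥} → ℝ) : ℝ :=
  deriv (fun t => f (Function.update θ x t)) (θ x)

section GammaThetaAux
variable {S : Type*} [Fintype S] [PartialOrder S] [OrderBot S]
    [DecidableEq S] [DecidableRel ((· ≤ ·) : S → S → Prop)]

variable {S : Type*} [Fintype S] [PartialOrder S] [OrderBot S]
    [DecidableEq S] [DecidableRel ((· ≤ ·) : S → S → Prop)]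

noncomputable def LL (θ : {x : S // x ≠ ⊥} → ℝ) (x : S) : ℝ :=
  ∑ s : {x : S // x ≠ ⊥}, if (s : S) ≤ x then θ s else 0

noncomputable def cc (u : {x : S // x ≠ ⊥}) (x : S) : ℝ := if (u : S) ≤ x then 1 else 0

noncomputable def EE (f : S → ℝ) (θ : {x : S // x ≠ ⊥} → ℝ) : ℝ :=
  ∑ x : S, f x * Real.exp (LL θ x)

noncomputable def GG (f : S → ℝ) (θ : {x : S // x ≠ ⊥} → ℝ) : ℝ :=
  EE f θ / EE (fun _ => 1) θ

lemma LL_update (θ : {x : S // x ≠ ⊥} → ℝ) (u : {x : S // x ≠ ⊥}) (t : ℝ) (x : S) :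
    LL (Function.update θ u t) x = (LL θ x - θ u * cc u x) + t * cc u x := by
  have h : ∀ s : {x : S // x ≠ ⊥},
      (if (s : S) ≤ x then Function.update θ u t s else 0)
        = (if (s : S) ≤ x then θ s else 0)
          + (if s = u then (t - θ u) * cc u x else 0) := by
    intro s
    by_cases hs : s = u
    · subst hs
      simp only [Function.update_self, if_pos rfl, cc]
      by_cases hx : (s : S) ≤ x <;> simp [hx]
    · simp [Function.update_of_ne hs, hs]
  simp only [LL]
  rw [Finset.sum_congr rfl fun s _ => h s, Finset.sum_add_distrib,
    Finset.sum_ite_eq' Finset.univ u]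
  simp only [Finset.mem_univ, if_pos]
  ring

lemma EE_one_pos (θ : {x : S // x ≠ ⊥} → ℝ) : 0 < EE (fun _ => 1) θ := by
  haveI : Nonempty S := ⟨⊥⟩
  refine Finset.sum_pos (fun i _ => by positivity) Finset.univ_nonempty

lemma hasDerivAt_EE (f : S → ℝ) (θ : {x : S // x ≠ ⊥} → ℝ) (u : {x : S // x ≠ ⊥}) :
    HasDerivAt (fun t => EE f (Function.update θ u t))
      (EE (fun x => cc u x * f x) θ) (θ u) := by
  simp only [EE]
  have h : ∀ x : S, x ∈ Finset.univ →
      HasDerivAt (fun t => f x * Real.exp (LL (Function.update θ u t) x))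
      (cc u x * f x * Real.exp (LL θ x)) (θ u) := by
    intro x _
    have h1 : (fun t => f x * Real.exp (LL (Function.update θ u t) x))
        = fun t => f x * Real.exp ((LL θ x - θ u * cc u x) + t * cc u x) := by
      funext t; rw [LL_update]
    rw [h1]
    have hlin : HasDerivAt (fun t : ℝ => (LL θ x - θ u * cc u x) + t * cc u x)
        (cc u x) (θ u) := by
      simpa using ((hasDerivAt_id (θ u)).mul_const (cc u x)).const_add
        (LL θ x - θ u * cc u x)
    have := (hlin.exp).const_mul (f x)
    refine this.congr_deriv ?_
    rw [show (LL θ x - θ u * cc u x) + θ u * cc u x = LL θ x by ring]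
    ring
  exact HasDerivAt.fun_sum h

lemma hasDerivAt_GG (f : S → ℝ) (θ : {x : S // x ≠ ⊥} → ℝ) (u : {x : S // x ≠ ⊥}) :
    HasDerivAt (fun t => GG f (Function.update θ u t))
      (GG (fun x => cc u x * f x) θ - GG f θ * GG (cc u) θ) (θ u) := by
  have h1 := hasDerivAt_EE f θ u
  have h2 := hasDerivAt_EE (fun _ => (1:ℝ)) θ u
  have hne : (fun t => EE (fun _ => (1:ℝ)) (Function.update θ u t)) (θ u) ≠ 0 := by
    simp only [Function.update_eq_self]
    exact (EE_one_pos θ).ne'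
  have := h1.div h2 hne
  simp only [Function.update_eq_self] at this
  simp only [GG]
  refine this.congr_deriv ?_
  have hE : EE (fun _ => (1:ℝ)) θ ≠ 0 := (EE_one_pos θ).ne'
  have : EE (fun x => cc u x * (fun _ => (1:ℝ)) x) θ = EE (cc u) θ := by
    simp [EE]
  rw [this]
  field_simp

lemma pd_GG (f : S → ℝ) (u : {x : S // x ≠ ⊥}) (θ : {x : S // x ≠ ⊥} → ℝ) :
    pd (GG f) u θ = GG (fun x => cc u x * f x) θ - GG f θ * GG (cc u) θ :=
  (hasDerivAt_GG f θ u).deriv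

lemma psi_eq (θ : {x : S // x ≠ ⊥} → ℝ) : psi θ = Real.log (EE (fun _ => 1) θ) := by
  simp [psi, EE, LL]

lemma pd_psi (u : {x : S // x ≠ ⊥}) (θ : {x : S // x ≠ ⊥} → ℝ) :
    pd psi u θ = GG (cc u) θ := by
  have h2 := hasDerivAt_EE (fun _ => (1:ℝ)) θ u
  have hne : (fun t => EE (fun _ => (1:ℝ)) (Function.update θ u t)) (θ u) ≠ 0 := by
    simp only [Function.update_eq_self]
    exact (EE_one_pos θ).ne'
  have hlog := h2.log hne
  simp only [Function.update_eq_self] at hlog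
  have hfun : (fun t => psi (Function.update θ u t))
      = fun t => Real.log (EE (fun _ => (1:ℝ)) (Function.update θ u t)) := by
    funext t; exact psi_eq _
  unfold pd
  rw [hfun, hlog.deriv]
  simp only [GG]
  congr 1
  simp [EE]

lemma pTheta_eq (θ : {x : S // x ≠ ⊥} → ℝ) (s : S) :
    pTheta θ s = Real.exp (LL θ s) / EE (fun _ => 1) θ := by
  rw [pTheta, psi_eq, Real.exp_sub, Real.exp_log (EE_one_pos θ)]
  rfl

lemma GG_eq_sum (f : S → ℝ) (θ : {x : S // x ≠ ⊥} → ℝ) :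
    GG f θ = ∑ s : S, f s * pTheta θ s := by
  simp only [pTheta_eq, GG, EE]
  rw [Finset.sum_div]
  refine Finset.sum_congr rfl fun s _ => by ring

lemma sum_pTheta (θ : {x : S // x ≠ ⊥} → ℝ) : ∑ s : S, pTheta θ s = 1 := by
  simp only [pTheta_eq]
  rw [← Finset.sum_div]
  rw [div_eq_one_iff_eq (EE_one_pos θ).ne']
  simp [EE]

lemma eta_eq (θ : {x : S // x ≠ ⊥} → ℝ) (u : {x : S // x ≠ ⊥}) :
    etaTheta θ (u : S) = ∑ s : S, cc u s * pTheta θ s := by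
  rw [etaTheta, Finset.sum_filter]
  refine Finset.sum_congr rfl fun s _ => ?_
  by_cases h : (u : S) ≤ s <;> simp [cc, h]


lemma third_eq (a b c : {x : S // x ≠ ⊥}) (θ : {x : S // x ≠ ⊥} → ℝ) :
    pd (pd (pd psi c) b) a θ
      = ∑ s : S, (cc a s - etaTheta θ (a : S)) * (cc b s - etaTheta θ (b : S))
          * (cc c s - etaTheta θ (c : S)) * pTheta θ s := by
  have h1 : pd psi c = GG (cc c) := funext fun θ' => pd_psi c θ'
  rw [h1]
  have h2 : pd (GG (cc c)) b
      = fun θ' => GG (fun s => cc b s * cc c s) θ' - GG (cc c) θ' * GG (cc b) θ' :=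
    funext fun θ' => pd_GG (cc c) b θ'
  rw [h2]
  have H := (hasDerivAt_GG (fun s => cc b s * cc c s) θ a).sub
    ((hasDerivAt_GG (cc c) θ a).mul (hasDerivAt_GG (cc b) θ a))
  simp only [Function.update_eq_self] at H
  refine Eq.trans H.deriv ?_
  -- now express everything as sums
  simp only [GG_eq_sum, eta_eq]
  set P := pTheta θ with hP
  have hP1 : ∑ s : S, P s = 1 := sum_pTheta θ
  set Ta := ∑ s : S, cc a s * P s with hTa
  set Tb := ∑ s : S, cc b s * P s with hTb
  set Tc := ∑ s : S, cc c s * P s with hTc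
  have expand : ∑ s : S, (cc a s - Ta) * (cc b s - Tb) * (cc c s - Tc) * P s
      = ∑ s : S, (cc a s * (cc b s * cc c s) * P s
          - Tc * (cc a s * cc b s * P s)
          - Tb * (cc a s * cc c s * P s)
          - Ta * (cc b s * cc c s * P s)
          + Tb * Tc * (cc a s * P s)
          + Ta * Tc * (cc b s * P s)
          + Ta * Tb * (cc c s * P s)
          - Ta * Tb * Tc * P s) :=
    Finset.sum_congr rfl fun s _ => by ring
  rw [expand]
  simp only [Finset.sum_sub_distrib, Finset.sum_add_distrib, ← Finset.mul_sum]
  rw [hP1]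
  ring
end GammaThetaAux

/-- (Theorem 4, θ-coordinates) With `g_{xy}(θ) = ∂²ψ(θ)/∂θ(x)∂θ(y)`, the Riemannian connection
coefficient `Γ_{xyz}(θ) = (1/2)(∂g_{yz}/∂θ(x) + ∂g_{xz}/∂θ(y) − ∂g_{xy}/∂θ(z))` satisfies
`Γ_{xyz}(θ) = (1/2) Σ_{s∈S} (ζ(x,s) − η_θ(x))(ζ(y,s) − η_θ(y))(ζ(z,s) − η_θ(z)) p_θ(s)`. -/
theorem gamma_theta {S : Type*} [Fintype S] [PartialOrder S] [OrderBot S]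
    [DecidableEq S] [DecidableRel ((· ≤ ·) : S → S → Prop)]
    (θ : {x : S // x ≠ ⊥} → ℝ) (x y z : {x : S // x ≠ ⊥}) :
    (1 / 2 : ℝ) * (pd (pd (pd psi z) y) x θ + pd (pd (pd psi z) x) y θ - pd (pd (pd psi y) x) z θ)
      = (1 / 2 : ℝ) * ∑ s : S,
          ((if (x : S) ≤ s then (1 : ℝ) else 0) - etaTheta θ (x : S))
            * ((if (y : S) ≤ s then (1 : ℝ) else 0) - etaTheta θ (y : S))
            * ((if (z : S) ≤ s then (1 : ℝ) else 0) - etaTheta θ (z : S))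
            * pTheta θ s := by
  have hx := third_eq x y z θ
  have hy := third_eq y x z θ
  have hz := third_eq z x y θ
  have e1 : ∑ s : S, (cc y s - etaTheta θ (y : S)) * (cc x s - etaTheta θ (x : S))
        * (cc z s - etaTheta θ (z : S)) * pTheta θ s
      = ∑ s : S, (cc x s - etaTheta θ (x : S)) * (cc y s - etaTheta θ (y : S))
        * (cc z s - etaTheta θ (z : S)) * pTheta θ s :=
    Finset.sum_congr rfl fun s _ => by ring
  have e2 : ∑ s : S, (cc z s - etaTheta θ (z : S)) * (cc x s - etaTheta θ (x : S))
        * (cc y s - etaTheta θ (y : S)) * pTheta θ s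
      = ∑ s : S, (cc x s - etaTheta θ (x : S)) * (cc y s - etaTheta θ (y : S))
        * (cc z s - etaTheta θ (z : S)) * pTheta θ s :=
    Finset.sum_congr rfl fun s _ => by ring
  rw [hx, hy, hz, e1, e2]
  simp only [cc]
  ring
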